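/- Let M be a finitely generated ℤ[t]-module with 2ⁿ·M = 0 for some n ≥ 1. Then M has length one if and only if for every nonzero x ∈ M the annihilator ideal Ann_{ℤ[t]}(x) is contained in the ideal 2ℤ[t]. -/

import Mathlib

/-- An `R`-module `M` has *length one* if there is a short exact sequence
`0 → F₁ → F₀ → M → 0` with `F₀`, `F₁` finitely generated free `R`-modules. -/
def IsLengthOne (R M : Type*) [CommRing R] [AddCommGroup M] [Module R M] : Prop :=
  ∃ (k l : ℕ) (f : (Fin k → R) →ₗ[R] (Fin l → R)) (g : (Fin l → R) →ₗ[R] M),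
    Function.Injective f ∧ Function.Surjective g ∧ LinearMap.range f = LinearMap.ker g

namespace LengthOneAux

open Polynomial

noncomputable section

abbrev R := Polynomial ℤ

/-! ### Basic ring-theoretic facts about `ℤ[t]` and `ℤ[t]/(2)` -/

lemma prime_two_zx : Prime (2 : R) := by
  have : ((C 2 : R)) = 2 := by simp
  rw [← this, Polynomial.prime_C_iff]; exact Int.prime_two

lemma map_C_span_two :
    Ideal.map (C : ℤ →+* R) (Ideal.span {(2:ℤ)}) = Ideal.span {(2 : R)} := by
  rw [Ideal.map_span]; simp

/-- `𝔽₂[X] ≃+* ℤ[X]/(2)`. -/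
def equivChain : (Polynomial (ZMod 2)) ≃+* (R ⧸ Ideal.span {(2 : R)}) :=
  ((Polynomial.mapEquiv ((Int.quotientSpanNatEquivZMod 2).symm)).trans
    (Ideal.polynomialQuotientEquivQuotientPolynomial (Ideal.span {((2:ℕ):ℤ)}))).trans
    (Ideal.quotEquivOfEq (by norm_num [map_C_span_two]))

instance : IsPrincipalIdealRing (R ⧸ Ideal.span {(2 : R)}) :=
  IsPrincipalIdealRing.of_surjective (equivChain : Polynomial (ZMod 2) →+* _)
    (EquivLike.surjective equivChain)

instance : IsDomain (R ⧸ Ideal.span {(2 : R)}) := by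
  have : (Ideal.span {(2 : R)}).IsPrime :=
    (Ideal.span_singleton_prime (by norm_num)).mpr prime_two_zx
  exact Ideal.Quotient.isDomain _

/-! ### Transfer lemma -/

lemma isLengthOne_aux {R : Type*} [CommRing R] {M : Type*} [AddCommGroup M] [Module R M]
    (k l : ℕ) (K P : Type*) [AddCommGroup K] [Module R K]
    [AddCommGroup P] [Module R P]
    (eK : (Fin k → R) ≃ₗ[R] K) (eP : (Fin l → R) ≃ₗ[R] P)
    (f : K →ₗ[R] P) (g : P →ₗ[R] M)
    (hf : Function.Injective f) (hg : Function.Surjective g)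
    (hfg : LinearMap.range f = LinearMap.ker g) : IsLengthOne R M := by
  refine ⟨k, l, (eP.symm.toLinearMap.comp f).comp eK.toLinearMap,
    g.comp eP.toLinearMap, ?_, ?_, ?_⟩
  · exact eP.symm.injective.comp (hf.comp eK.injective)
  · exact hg.comp eP.surjective
  · ext v
    simp only [LinearMap.mem_range, LinearMap.mem_ker, LinearMap.coe_comp,
      LinearEquiv.coe_coe, Function.comp_apply]
    constructor
    · rintro ⟨u, rfl⟩
      rw [LinearEquiv.apply_symm_apply]
      have : f (eK u) ∈ LinearMap.ker g := hfg ▸ LinearMap.mem_range_self f (eK u)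
      exact this
    · intro hv
      have : eP v ∈ LinearMap.range f := hfg.symm ▸ hv
      obtain ⟨u, hu⟩ := this
      exact ⟨eK.symm u, by rw [LinearEquiv.apply_symm_apply, hu, LinearEquiv.symm_apply_apply]⟩

lemma isLengthOne_of_subsingleton {R : Type*} [CommRing R] {M : Type*} [AddCommGroup M]
    [Module R M] (h : ∀ x : M, x = 0) : IsLengthOne R M := by
  refine ⟨0, 0, LinearMap.id, 0, fun a b _ => ?_, fun x => ⟨0, (h x).symm⟩, ?_⟩
  · funext i; exact absurd i.2 (by omega)
  · apply le_antisymm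
    · exact le_top.trans_eq (LinearMap.ker_zero).symm
    · intro v _
      exact ⟨v, rfl⟩

/-! ### Forward direction -/

lemma dvd_of_two_pow_mul {R : Type*} [CommRing R] {p : R} (hp : Prime (2 : R)) [IsDomain R]
    (h2p : ¬ (2:R) ∣ p)
    (n : ℕ) : ∀ a b : R, 2^n * a = p * b → p ∣ a := by
  induction n with
  | zero => intro a b h; exact ⟨b, by linear_combination h⟩
  | succ n ih =>
    intro a b h
    have h2 : (2:R) ∣ p * b := ⟨2^n * a, by linear_combination -h⟩
    rcases hp.dvd_mul.mp h2 with h' | h'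
    · exact absurd h' h2p
    · obtain ⟨b', rfl⟩ := h'
      have : 2^n * a = p * b' :=
        mul_left_cancel₀ hp.ne_zero (by linear_combination h)
      exact ih a b' this

lemma forward_dir {R : Type*} [CommRing R] {M : Type*} [AddCommGroup M] [Module R M]
    [IsDomain R] (hp2 : Prime (2 : R)) (n : ℕ)
    (hexp : ∀ x : M, (2 : R) ^ n • x = 0) (hL : IsLengthOne R M) :
    ∀ x : M, x ≠ 0 → ∀ p : R, p • x = 0 → p ∈ Ideal.span {(2 : R)} := by
  obtain ⟨k, l, f, g, hfinj, hgsurj, hfg⟩ := hL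
  intro x hx p hpx
  rw [Ideal.mem_span_singleton]
  by_contra h2p
  obtain ⟨v, rfl⟩ := hgsurj x
  have hpv : p • v ∈ LinearMap.ker g := by rw [LinearMap.mem_ker, map_smul, hpx]
  have h2v : (2:R)^n • v ∈ LinearMap.ker g := by
    rw [LinearMap.mem_ker, map_smul, hexp]
  rw [← hfg] at hpv h2v
  obtain ⟨a, ha⟩ := hpv
  obtain ⟨b, hb⟩ := h2v
  have key : (2:R)^n • a = p • b := by
    apply hfinj
    rw [map_smul, map_smul, ha, hb, smul_comm]
  have hdvd : ∀ i, p ∣ a i := by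
    intro i
    have : (2:R)^n * a i = p * b i := by
      have := congrFun key i
      simpa [Pi.smul_apply, smul_eq_mul] using this
    exact dvd_of_two_pow_mul hp2 h2p n _ _ this
  choose c hc using hdvd
  have hvc : v = f c := by
    have hfa : f a = p • f c := by
      rw [← map_smul]
      congr 1
      funext i
      simp [Pi.smul_apply, smul_eq_mul, ← hc i]
    have hp0 : p ≠ 0 := fun h => h2p (h ▸ dvd_zero 2)
    have hz : p • (v - f c) = 0 := by
      rw [smul_sub, ← ha, hfa, sub_self]
    have hsub : v - f c = 0 := by
      funext i
      have hcomp := congrFun hz i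
      simp only [Pi.smul_apply, Pi.sub_apply, smul_eq_mul, Pi.zero_apply] at hcomp
      rcases mul_eq_zero.mp hcomp with h | h
      · exact absurd h hp0
      · exact h
    exact sub_eq_zero.mp hsub
  apply hx
  have : v ∈ LinearMap.ker g := hfg ▸ (hvc ▸ LinearMap.mem_range_self f c)
  exact this

/-! ### Base case: exponent 2 -/

/-- linear combination map -/
def myLC {S : Type*} [CommRing S] {M : Type*} [AddCommGroup M] [Module S M]
    {ι : Type*} [Fintype ι] (v : ι → M) : (ι → S) →ₗ[S] M where
  toFun c := ∑ i, c i • v i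
  map_add' a b := by simp [add_smul, Finset.sum_add_distrib]
  map_smul' r a := by simp [mul_smul, Finset.smul_sum]

lemma base_case (M : Type*) [AddCommGroup M] [Module R M] [Module.Finite R M]
    (h2 : ∀ x : M, (2:R) • x = 0)
    (hann : ∀ x : M, x ≠ 0 → ∀ p : R, p • x = 0 → p ∈ Ideal.span {(2:R)}) :
    IsLengthOne R M := by
  set I : Ideal R := Ideal.span {(2:R)} with hI
  have hTor : Module.IsTorsionBySet R M I :=
    (Module.isTorsionBySet_span_singleton_iff _).mpr h2
  letI : Module (R ⧸ I) M := hTor.module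
  have hcompat : ∀ (p : R) (x : M), Ideal.Quotient.mk I p • x = p • x := fun p x => rfl
  haveI : NoZeroSMulDivisors (R ⧸ I) M := by
    refine ⟨fun {s x} h => ?_⟩
    obtain ⟨p, rfl⟩ := Ideal.Quotient.mk_surjective s
    by_cases hx : x = 0
    · exact Or.inr hx
    · left
      rw [hcompat] at h
      rw [Ideal.Quotient.eq_zero_iff_mem]
      exact hann x hx p h
  haveI : Module.Finite (R ⧸ I) M := by
    obtain ⟨s, hs⟩ := Module.Finite.fg_top (R := R) (M := M)
    set N : Submodule R M :=
      { carrier := Submodule.span (R ⧸ I) (s : Set M)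
        add_mem' := fun h1 h2 => add_mem h1 h2
        zero_mem' := zero_mem _
        smul_mem' := fun r x hx => by
          have : r • x = Ideal.Quotient.mk I r • x := (hcompat r x).symm
          rw [this]
          exact Submodule.smul_mem _ _ hx } with hN
    refine ⟨⟨s, eq_top_iff.mpr fun m _ => ?_⟩⟩
    have hm : m ∈ Submodule.span R (s : Set M) := hs ▸ Submodule.mem_top
    have hle : Submodule.span R (s : Set M) ≤ N :=
      Submodule.span_le.mpr (fun y hy => Submodule.subset_span hy)
    exact hle hm
  haveI : Module.Free (R ⧸ I) M := Module.free_of_finite_type_torsion_free'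
  set ι := Module.Free.ChooseBasisIndex (R ⧸ I) M with hι
  set b : Module.Basis ι (R ⧸ I) M := Module.Free.chooseBasis (R ⧸ I) M with hb
  set g : (ι → R) →ₗ[R] M := myLC (fun i => b i) with hg
  have hgapp : ∀ v : ι → R, g v = ∑ i, v i • b i := fun v => rfl
  have hker : ∀ v : ι → R, g v = 0 ↔ ∀ i, (2:R) ∣ v i := by
    intro v
    rw [hgapp]
    have : ∀ i : ι, v i • b i = (Ideal.Quotient.mk I (v i)) • b i := fun i => (hcompat _ _).symm
    rw [Finset.sum_congr rfl (fun i _ => this i)]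
    constructor
    · intro h i
      have hli := Fintype.linearIndependent_iff.mp b.linearIndependent
        (fun i => Ideal.Quotient.mk I (v i)) h i
      rw [Ideal.Quotient.eq_zero_iff_mem, hI, Ideal.mem_span_singleton] at hli
      exact hli
    · intro h
      have : ∀ i : ι, (Ideal.Quotient.mk I (v i)) • b i = 0 := by
        intro i
        have : Ideal.Quotient.mk I (v i) = 0 := by
          rw [Ideal.Quotient.eq_zero_iff_mem, hI, Ideal.mem_span_singleton]
          exact h i
        rw [this]; exact zero_smul (R ⧸ I) (b i)
      rw [Finset.sum_congr rfl (fun i _ => this i), Finset.sum_const_zero]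
  have hgsurj : Function.Surjective g := by
    intro x
    have hlift : ∀ i : ι, ∃ p : R, Ideal.Quotient.mk I p = b.repr x i := fun i =>
      Ideal.Quotient.mk_surjective _
    choose w hw using hlift
    refine ⟨w, ?_⟩
    rw [hgapp]
    have : ∀ i : ι, w i • b i = b.repr x i • b i := by
      intro i; rw [← hcompat, hw]
    rw [Finset.sum_congr rfl (fun i _ => this i)]
    exact b.sum_repr x
  set f : (ι → R) →ₗ[R] (ι → R) := (2 : R) • LinearMap.id with hf
  have hfapp : ∀ v : ι → R, f v = fun i => 2 * v i := fun v => rfl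
  have hfinj : Function.Injective f := by
    intro u v huv
    funext i
    rw [hfapp, hfapp] at huv
    have : (2:R) * u i = 2 * v i := congrFun huv i
    exact mul_left_cancel₀ two_ne_zero this
  have hrange : LinearMap.range f = LinearMap.ker g := by
    ext v
    rw [LinearMap.mem_ker, hker, LinearMap.mem_range]
    constructor
    · rintro ⟨w, rfl⟩ i
      exact ⟨w i, rfl⟩
    · intro h
      choose w hw using h
      exact ⟨w, by funext i; rw [hfapp]; exact (hw i).symm⟩
  exact isLengthOne_aux (Fintype.card ι) (Fintype.card ι) (ι → R) (ι → R)
    (LinearEquiv.funCongrLeft R R (Fintype.equivFin ι))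
    (LinearEquiv.funCongrLeft R R (Fintype.equivFin ι)) f g hfinj hgsurj hrange

/-! ### Horseshoe lemma -/

/-- equivalence for reindexing products of pi types -/
def prodPiEquiv {R : Type*} [CommRing R] (a b : ℕ) :
    (Fin (a + b) → R) ≃ₗ[R] (Fin a → R) × (Fin b → R) :=
  (LinearEquiv.funCongrLeft R R finSumFinEquiv.symm.symm).trans
    (LinearEquiv.sumArrowLequivProdArrow _ _ R R)

lemma horseshoe {R : Type*} [CommRing R] {M : Type*} [AddCommGroup M] [Module R M]
    (A : Submodule R M) (h1 : IsLengthOne R A) (h2 : IsLengthOne R (M ⧸ A)) :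
    IsLengthOne R M := by
  obtain ⟨k₁, l₁, f₁, g₁, hf₁, hg₁, hfg₁⟩ := h1
  obtain ⟨k₂, l₂, f₂, g₂, hf₂, hg₂, hfg₂⟩ := h2
  obtain ⟨h, hh⟩ := Module.projective_lifting_property A.mkQ g₂
    (Submodule.Quotient.mk_surjective A)
  have hmem : ∀ w : Fin k₂ → R, h (f₂ w) ∈ A := by
    intro w
    have : A.mkQ (h (f₂ w)) = g₂ (f₂ w) := by rw [← hh]; rfl
    have h0 : g₂ (f₂ w) = 0 := by
      have : f₂ w ∈ LinearMap.ker g₂ := hfg₂ ▸ LinearMap.mem_range_self f₂ w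
      exact this
    rw [h0] at this
    exact (Submodule.Quotient.mk_eq_zero A).mp this
  obtain ⟨τ, hτ⟩ := Module.projective_lifting_property g₁
    (LinearMap.codRestrict A (h.comp f₂) hmem) (hg₁)
  set g : (Fin l₁ → R) × (Fin l₂ → R) →ₗ[R] M :=
    LinearMap.coprod (A.subtype.comp g₁) (h) with hgdef
  have hgapp : ∀ x y, g (x, y) = (g₁ x : M) + h y := fun x y => rfl
  have hgsurj : Function.Surjective g := by
    intro m
    obtain ⟨y, hy⟩ := hg₂ (A.mkQ m)
    have hmA : m - h y ∈ A := by
      rw [← Submodule.Quotient.mk_eq_zero A]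
      have : A.mkQ (m - h y) = A.mkQ m - A.mkQ (h y) := by rw [map_sub]
      have h2 : A.mkQ (h y) = g₂ y := by rw [← hh]; rfl
      rw [← Submodule.mkQ_apply, this, h2, hy, sub_self]
    obtain ⟨x, hx⟩ := hg₁ ⟨m - h y, hmA⟩
    refine ⟨(x, y), ?_⟩
    rw [hgapp, hx]
    simp
  set F : (Fin k₁ → R) × (Fin k₂ → R) →ₗ[R] (Fin l₁ → R) × (Fin l₂ → R) :=
    LinearMap.prod (f₁.comp (LinearMap.fst R _ _) - τ.comp (LinearMap.snd R _ _))
      (f₂.comp (LinearMap.snd R _ _)) with hFdef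
  have hFapp : ∀ u w, F (u, w) = (f₁ u - τ w, f₂ w) := fun u w => rfl
  have hFinj : Function.Injective F := by
    intro ⟨u, w⟩ ⟨u', w'⟩ huw
    rw [hFapp, hFapp, Prod.mk.injEq] at huw
    obtain ⟨e1, e2⟩ := huw
    have hw : w = w' := hf₂ e2
    subst hw
    have : f₁ u = f₁ u' := by
      rwa [sub_left_inj] at e1
    have hu : u = u' := hf₁ this
    rw [hu]
  have hτA : ∀ w, (g₁ (τ w) : M) = h (f₂ w) := by
    intro w
    have : g₁ (τ w) = LinearMap.codRestrict A (h.comp f₂) hmem w := by rw [← hτ]; rfl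
    rw [this]
    rfl
  have hrange : LinearMap.range F = LinearMap.ker g := by
    ext ⟨x, y⟩
    constructor
    · rintro ⟨⟨u, w⟩, huw⟩
      rw [LinearMap.mem_ker, ← huw, hFapp, hgapp]
      rw [map_sub]
      have hb : (g₁ (f₁ u) : M) = 0 := by
        have : f₁ u ∈ LinearMap.ker g₁ := hfg₁ ▸ LinearMap.mem_range_self f₁ u
        rw [LinearMap.mem_ker] at this
        rw [this]; rfl
      push_cast [Submodule.coe_sub]
      rw [hb, hτA, zero_sub, neg_add_cancel]
    · intro hxy
      rw [LinearMap.mem_ker, hgapp] at hxy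
      have hy : g₂ y = 0 := by
        have : A.mkQ ((g₁ x : M) + h y) = 0 := by rw [hxy, map_zero]
        rw [map_add] at this
        have hA : A.mkQ (g₁ x : M) = 0 := (Submodule.Quotient.mk_eq_zero A).mpr (g₁ x).2
        have hH : A.mkQ (h y) = g₂ y := by rw [← hh]; rfl
        rw [hA, hH, zero_add] at this
        exact this
      have : y ∈ LinearMap.range f₂ := hfg₂.symm ▸ hy
      obtain ⟨w, rfl⟩ := this
      have hgx : g₁ (x + τ w) = 0 := by
        apply Subtype.ext
        push_cast [map_add]
        rw [hτA]
        have : (g₁ x : M) = - h (f₂ w) := by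
          rw [eq_neg_iff_add_eq_zero]; exact hxy
        rw [this, neg_add_cancel]
      have : x + τ w ∈ LinearMap.range f₁ := hfg₁.symm ▸ hgx
      obtain ⟨u, hu⟩ := this
      refine ⟨(u, w), ?_⟩
      rw [hFapp, hu]
      simp
  exact isLengthOne_aux (k₁ + k₂) (l₁ + l₂) _ _
    (prodPiEquiv k₁ k₂) (prodPiEquiv l₁ l₂) F g hFinj hgsurj hrange

/-! ### The reverse direction, by induction on the exponent -/

lemma main_ind : ∀ (n : ℕ) (M : Type u) [AddCommGroup M] [Module R M] [Module.Finite R M],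
    (∀ x : M, (2:R)^n • x = 0) →
    (∀ x : M, x ≠ 0 → ∀ p : R, p • x = 0 → p ∈ Ideal.span {(2:R)}) →
    IsLengthOne R M := by
  intro n
  induction n with
  | zero =>
    intro M _ _ _ hexp _
    exact isLengthOne_of_subsingleton (fun x => by simpa using hexp x)
  | succ n ih =>
    intro M _ _ _ hexp hann
    set A : Submodule R M := Submodule.torsionBy R M 2 with hA
    have hA2 : ∀ x : A, (2:R) • x = 0 := by
      intro x
      apply Subtype.ext
      have hx2 := x.2
      rw [Submodule.mem_torsionBy_iff] at hx2
      exact hx2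
    have hannA : ∀ x : A, x ≠ 0 → ∀ p : R, p • x = 0 → p ∈ Ideal.span {(2:R)} := by
      intro x hx p hp
      refine hann (x : M) (fun h => hx (Subtype.ext h)) p ?_
      have := congrArg (Subtype.val) hp
      exact this
    haveI : Module.Finite R A := Module.Finite.iff_fg.mpr (IsNoetherian.noetherian A)
    have hLA : IsLengthOne R A := base_case A hA2 hannA
    have hexpC : ∀ y : M ⧸ A, (2:R)^n • y = 0 := by
      intro y
      obtain ⟨x, rfl⟩ := Submodule.Quotient.mk_surjective A y
      rw [← Submodule.Quotient.mk_smul, Submodule.Quotient.mk_eq_zero]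
      rw [hA, Submodule.mem_torsionBy_iff, smul_smul]
      have : (2:R) * 2^n = 2^(n+1) := by ring
      rw [this]
      exact hexp x
    have hannC : ∀ y : M ⧸ A, y ≠ 0 → ∀ p : R, p • y = 0 →
        p ∈ Ideal.span {(2:R)} := by
      intro y hy p hp
      obtain ⟨x, rfl⟩ := Submodule.Quotient.mk_surjective A y
      rw [← Submodule.Quotient.mk_smul, Submodule.Quotient.mk_eq_zero, hA,
        Submodule.mem_torsionBy_iff] at hp
      have h2x : (2:R) • x ≠ 0 := by
        intro h0
        apply hy
        rw [Submodule.Quotient.mk_eq_zero, hA, Submodule.mem_torsionBy_iff]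
        exact h0
      have : p • ((2:R) • x) = 0 := by
        rw [smul_comm]
        exact hp
      exact hann _ h2x p this
    have hLC : IsLengthOne R (M ⧸ A) := ih (M ⧸ A) hexpC hannC
    exact horseshoe A hLA hLC

end

end LengthOneAux

/-- Let `M` be a finitely generated `ℤ[t]`-module with `2ⁿ • M = 0` for some `n ≥ 1`.
Then `M` has length one iff for every nonzero `x ∈ M` the annihilator ideal of `x`
is contained in the ideal `2ℤ[t]`. -/
theorem lengthOne_iff_annihilators_sub_two
    (M : Type*) [AddCommGroup M] [Module (Polynomial ℤ) M]
    [Module.Finite (Polynomial ℤ) M]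
    (n : ℕ) (hn : 1 ≤ n) (hexp : ∀ x : M, (2 : Polynomial ℤ) ^ n • x = 0) :
    IsLengthOne (Polynomial ℤ) M ↔
      ∀ x : M, x ≠ 0 → ∀ p : Polynomial ℤ, p • x = 0 →
        p ∈ Ideal.span {(2 : Polynomial ℤ)} := by
  constructor
  · exact LengthOneAux.forward_dir LengthOneAux.prime_two_zx n hexp
  · exact fun hann => LengthOneAux.main_ind n M hexp hann
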